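/- Let f : ℝ^p → ℝ be μ-strongly convex and differentiable, attaining its global minimum at α. Suppose that for every anchor point β̄ ∈ ℝ^p there is a differentiable surrogate g(· | β̄) : ℝ^p → ℝ satisfying: (i) majorization g(β | β̄) ≥ f(β) for all β, (ii) tangency g(β̄ | β̄) = f(β̄) and ∇g(β̄ | β̄) = ∇f(β̄), and (iii) the uniform Lipschitz condition ‖∇g(γ | β̄) − ∇g(δ | β̄)‖ ≤ L‖γ − δ‖ for all γ, δ, β̄ (with one constant L). If β_{m+1} is a global minimizer of g(· | β_m) for each m, then f(β_m) − f(α) ≤ [1 − (μ/(2L))²]^m · [f(β₀) − f(α)] for all m, so f(β_m) converges to f(α) at a linear rate. -/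

import Mathlib

open Set
open scoped RealInnerProductSpace

section Aux

variable {E : Type*} [NormedAddCommGroup E] [InnerProductSpace ℝ E] [CompleteSpace E]

/-- The Fréchet derivative evaluated at a vector equals the inner product with the gradient. -/
lemma fderiv_apply_eq_inner_grad {f : E → ℝ} {x : E} (h : DifferentiableAt ℝ f x) (v : E) :
    fderiv ℝ f x v = ⟪gradient f x, v⟫ := by
  have h1 : fderiv ℝ f x = InnerProductSpace.toDual ℝ E (gradient f x) :=
    h.hasGradientAt.hasFDerivAt.fderiv
  rw [h1, InnerProductSpace.toDual_apply_apply]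

/-- First-order lower bound for a differentiable convex function. -/
lemma convex_lowerbound (φ : E → ℝ) (hc : ConvexOn ℝ Set.univ φ) (hd : Differentiable ℝ φ)
    (x y : E) : φ x + fderiv ℝ φ x (y - x) ≤ φ y := by
  set ψ : ℝ → ℝ := fun t => φ (AffineMap.lineMap x y t) with hψ
  have hψc : ConvexOn ℝ Set.univ ψ := by
    have := hc.comp_affineMap (AffineMap.lineMap x y)
    exact this
  have hline : HasDerivAt (fun t : ℝ => (AffineMap.lineMap x y t : E)) (y - x) 0 := by
    have h1 : HasDerivAt (fun t : ℝ => t • (y - x) + x) ((1 : ℝ) • (y - x)) 0 :=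
      ((hasDerivAt_id (0 : ℝ)).smul_const (y - x)).add_const x
    have heq : (fun t : ℝ => (AffineMap.lineMap x y t : E)) = fun t : ℝ => t • (y - x) + x := by
      funext t; simp [AffineMap.lineMap_apply_module']
    rw [heq]; simpa using h1
  have hderiv : HasDerivAt ψ (fderiv ℝ φ x (y - x)) 0 := by
    have h2 : HasFDerivAt φ (fderiv ℝ φ x) ((AffineMap.lineMap x y : ℝ →ᵃ[ℝ] E) 0) := by
      rw [AffineMap.lineMap_apply_zero]; exact (hd x).hasFDerivAt
    exact h2.comp_hasDerivAt 0 hline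
  have hslope : fderiv ℝ φ x (y - x) ≤ slope ψ 0 1 :=
    hψc.le_slope_of_hasDerivAt (mem_univ _) (mem_univ _) zero_lt_one hderiv
  have hval : slope ψ 0 1 = φ y - φ x := by
    rw [slope_def_field]
    simp [ψ, AffineMap.lineMap_apply_zero, AffineMap.lineMap_apply_one]
  rw [hval] at hslope
  linarith

/-- Descent-type lemma (with a weak constant): a function with `L`-Lipschitz gradient
is bounded above by its tangent plane plus `L‖y - x‖²`. -/
lemma descent_lemma (h : E → ℝ) (hd : Differentiable ℝ h) (L : ℝ) (hL : 0 ≤ L)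
    (hlip : ∀ a b, ‖gradient h a - gradient h b‖ ≤ L * ‖a - b‖) (x y : E) :
    h y ≤ h x + ⟪gradient h x, y - x⟫ + L * ‖y - x‖ ^ 2 := by
  have key : ‖h y - h x - (fderiv ℝ h x) (y - x)‖ ≤ (L * ‖y - x‖) * ‖y - x‖ := by
    apply Convex.norm_image_sub_le_of_norm_hasFDerivWithin_le'
      (s := Metric.closedBall x ‖y - x‖)
      (f' := fun z => fderiv ℝ h z)
    · exact fun z _ => (hd z).hasFDerivAt.hasFDerivWithinAt
    · intro z hz
      have e1 : fderiv ℝ h z - fderiv ℝ h x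
          = InnerProductSpace.toDual ℝ E (gradient h z - gradient h x) := by
        rw [map_sub, (hd z).hasGradientAt.hasFDerivAt.fderiv,
          (hd x).hasGradientAt.hasFDerivAt.fderiv]
      rw [e1, LinearIsometryEquiv.norm_map]
      calc ‖gradient h z - gradient h x‖ ≤ L * ‖z - x‖ := hlip z x
        _ ≤ L * ‖y - x‖ := by
            have : ‖z - x‖ ≤ ‖y - x‖ := by
              simpa [dist_eq_norm] using Metric.mem_closedBall.mp hz
            exact mul_le_mul_of_nonneg_left this hL
    · exact convex_closedBall x _
    · exact Metric.mem_closedBall_self (norm_nonneg _)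
    · simpa [Metric.mem_closedBall, dist_eq_norm] using le_refl ‖y - x‖
  rw [fderiv_apply_eq_inner_grad (hd x)] at key
  have h1 : h y - h x - ⟪gradient h x, y - x⟫ ≤ (L * ‖y - x‖) * ‖y - x‖ :=
    (le_abs_self _).trans (by simpa [Real.norm_eq_abs] using key)
  nlinarith [norm_nonneg (y - x)]

/-- First-order strong convexity inequality. -/
lemma strong_grad_lb {μ : ℝ} {f : E → ℝ} (hsc : StrongConvexOn Set.univ μ f)
    (hdiff : Differentiable ℝ f) (x y : E) :
    f x + ⟪gradient f x, y - x⟫ + μ / 2 * ‖y - x‖ ^ 2 ≤ f y := by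
  set φ : E → ℝ := fun z => f z - μ / 2 * ⟪z, z⟫ with hφdef
  have hφc : ConvexOn ℝ Set.univ φ := by
    have := strongConvexOn_iff_convex.mp hsc
    have heq : (fun z : E => f z - μ / 2 * ‖z‖ ^ 2) = φ := by
      funext z; rw [hφdef]; simp [real_inner_self_eq_norm_sq]
    rwa [heq] at this
  have hφd : ∀ z : E, HasFDerivAt φ
      ((fderiv ℝ f z) - (μ / 2) • ((fderivInnerCLM ℝ (z, z)).comp
        ((ContinuousLinearMap.id ℝ E).prod (ContinuousLinearMap.id ℝ E)))) z := by
    intro z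
    exact ((hdiff z).hasFDerivAt.sub
      (((hasFDerivAt_id z).inner ℝ (hasFDerivAt_id z)).const_mul (μ / 2)))
  have hφdiff : Differentiable ℝ φ := fun z => (hφd z).differentiableAt
  have hkey := convex_lowerbound φ hφc hφdiff x y
  rw [(hφd x).fderiv] at hkey
  simp only [ContinuousLinearMap.sub_apply, ContinuousLinearMap.smul_apply,
    ContinuousLinearMap.comp_apply, ContinuousLinearMap.prod_apply,
    ContinuousLinearMap.id_apply, fderivInnerCLM_apply, smul_eq_mul] at hkey
  rw [fderiv_apply_eq_inner_grad (hdiff x)] at hkey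
  have hexp : ⟪y - x, y - x⟫ = ⟪y, y⟫ - ⟪x, x⟫ - ⟪x, y - x⟫ - ⟪y - x, x⟫ := by
    simp only [inner_sub_left, inner_sub_right]
    ring
  have hn : ‖y - x‖ ^ 2 = ⟪y - x, y - x⟫ := (real_inner_self_eq_norm_sq _).symm
  simp only [hφdef] at hkey
  rw [hn, hexp]
  linarith

end Aux

/-- Linear convergence of MM iterates for a strongly convex objective:
if `f` is `μ`-strongly convex and differentiable with global minimum at `α`,
each surrogate `g b̄` majorizes `f`, touches it in value and gradient at its
anchor `b̄`, has an `L`-Lipschitz gradient uniformly in `b̄`, and each iterate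
minimizes the current surrogate, then
`f(β_m) - f(α) ≤ [1 - (μ/(2L))²]^m [f(β₀) - f(α)]`. -/
theorem mm_linear_convergence
    (p : ℕ) (μ L : ℝ) (hμ : 0 < μ) (hL : 0 < L)
    (f : EuclideanSpace ℝ (Fin p) → ℝ)
    (hsc : StrongConvexOn Set.univ μ f)
    (hdiff : Differentiable ℝ f)
    (α : EuclideanSpace ℝ (Fin p))
    (hmin : ∀ x, f α ≤ f x)
    (g : EuclideanSpace ℝ (Fin p) → EuclideanSpace ℝ (Fin p) → ℝ)
    (hgdiff : ∀ banchor, Differentiable ℝ (g banchor))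
    (hmaj : ∀ banchor x, f x ≤ g banchor x)
    (htan : ∀ banchor, g banchor banchor = f banchor)
    (htangrad : ∀ banchor, gradient (g banchor) banchor = gradient f banchor)
    (hlip : ∀ banchor γ δ,
      ‖gradient (g banchor) γ - gradient (g banchor) δ‖ ≤ L * ‖γ - δ‖)
    (β : ℕ → EuclideanSpace ℝ (Fin p))
    (hiter : ∀ m, ∀ x, g (β m) (β (m + 1)) ≤ g (β m) x) :
    ∀ m : ℕ, f (β m) - f α ≤ (1 - (μ / (2 * L)) ^ 2) ^ m * (f (β 0) - f α) := by
  by_cases hp : 0 < p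
  · -- The surrogate descent bound at any anchor b, for any y:
    have hsurr : ∀ b y : EuclideanSpace ℝ (Fin p),
        g b y ≤ f b + ⟪gradient f b, y - b⟫ + L * ‖y - b‖ ^ 2 := by
      intro b y
      have := descent_lemma (g b) (hgdiff b) L hL.le (hlip b) b y
      rwa [htan b, htangrad b] at this
    -- μ ≤ 2L
    have hμ2L : μ ≤ 2 * L := by
      set e : EuclideanSpace ℝ (Fin p) := EuclideanSpace.single ⟨0, hp⟩ (1 : ℝ) with he
      have hne : ‖e‖ = 1 := by rw [he, EuclideanSpace.norm_single]; simp
      have hsum1 : (α + e) - α = e := by abel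
      have hsum2 : (α - e) - α = -e := by abel
      have h1 := strong_grad_lb hsc hdiff α (α + e)
      have h1' := strong_grad_lb hsc hdiff α (α - e)
      have h2 := (hmaj α (α + e)).trans (hsurr α (α + e))
      have h2' := (hmaj α (α - e)).trans (hsurr α (α - e))
      rw [hsum1] at h1 h2
      rw [hsum2] at h1' h2'
      simp only [inner_neg_right, norm_neg, hne, one_pow, mul_one] at h1 h1' h2 h2'
      linarith
    -- per-step contraction
    have step : ∀ m, f (β (m + 1)) - f α ≤ (1 - μ / (2 * L)) * (f (β m) - f α) := by
      intro m
      set b := β m with hb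
      set G := gradient f b with hG
      set y : EuclideanSpace ℝ (Fin p) := b - ((2 * L)⁻¹) • G with hy
      have hyb : y - b = -(((2 * L)⁻¹) • G) := by rw [hy]; abel
      have hsy : g b y ≤ f b - (2 * L)⁻¹ * ‖G‖ ^ 2 + L * ((2 * L)⁻¹ ^ 2 * ‖G‖ ^ 2) := by
        have := hsurr b y
        rw [hyb] at this
        have hi : ⟪G, -(((2 * L)⁻¹) • G)⟫ = -((2 * L)⁻¹ * ‖G‖ ^ 2) := by
          rw [inner_neg_right, real_inner_smul_right, real_inner_self_eq_norm_sq]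
        have hn : ‖-(((2 * L)⁻¹) • G)‖ ^ 2 = (2 * L)⁻¹ ^ 2 * ‖G‖ ^ 2 := by
          rw [norm_neg, norm_smul, mul_pow, Real.norm_eq_abs, sq_abs]
        rw [hi, hn] at this
        linarith
      have hchain : f (β (m + 1)) ≤ f b - (4 * L)⁻¹ * ‖G‖ ^ 2 := by
        have h1 : f (β (m + 1)) ≤ g b (β (m + 1)) := hmaj b _
        have h2 : g b (β (m + 1)) ≤ g b y := hiter m y
        have harith : f b - (2 * L)⁻¹ * ‖G‖ ^ 2 + L * ((2 * L)⁻¹ ^ 2 * ‖G‖ ^ 2)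
            = f b - (4 * L)⁻¹ * ‖G‖ ^ 2 := by
          field_simp
          ring
        rw [harith] at hsy
        linarith
      -- PL inequality: 2μ (f b - f α) ≤ ‖G‖²
      have hPL : 2 * μ * (f b - f α) ≤ ‖G‖ ^ 2 := by
        have h1 := strong_grad_lb hsc hdiff b α
        have h2 : |⟪G, α - b⟫| ≤ ‖G‖ * ‖α - b‖ := abs_real_inner_le_norm G (α - b)
        have h3 := abs_le.mp h2
        nlinarith [sq_nonneg (‖G‖ - μ * ‖α - b‖), norm_nonneg (α - b), norm_nonneg G]
      have hD : 0 ≤ f b - f α := by linarith [hmin b]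
      have hL4 : (0 : ℝ) < 4 * L := by linarith
      have hkey : (4 * L)⁻¹ * (2 * μ * (f b - f α)) ≤ (4 * L)⁻¹ * ‖G‖ ^ 2 :=
        mul_le_mul_of_nonneg_left hPL (by positivity)
      have harith2 : f b - f α - (4 * L)⁻¹ * (2 * μ * (f b - f α))
          = (1 - μ / (2 * L)) * (f b - f α) := by
        field_simp
        ring
      linarith [harith2 ▸ (by linarith : f (β (m + 1)) - f α
        ≤ f b - f α - (4 * L)⁻¹ * (2 * μ * (f b - f α)))]
    -- the contraction factor comparisons
    have ht1 : μ / (2 * L) ≤ 1 := by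
      rw [div_le_one (by linarith)]; linarith
    have ht0 : 0 < μ / (2 * L) := by positivity
    have hc0 : 0 ≤ 1 - (μ / (2 * L)) ^ 2 := by nlinarith
    have hstep' : ∀ m, f (β (m + 1)) - f α
        ≤ (1 - (μ / (2 * L)) ^ 2) * (f (β m) - f α) := by
      intro m
      have hD : 0 ≤ f (β m) - f α := by linarith [hmin (β m)]
      have h1 := step m
      nlinarith [mul_le_mul_of_nonneg_right
        (by nlinarith : (1 - μ / (2 * L)) ≤ 1 - (μ / (2 * L)) ^ 2) hD]
    intro m
    induction m with
    | zero => simp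
    | succ m ih =>
      calc f (β (m + 1)) - f α ≤ (1 - (μ / (2 * L)) ^ 2) * (f (β m) - f α) := hstep' m
        _ ≤ (1 - (μ / (2 * L)) ^ 2) * ((1 - (μ / (2 * L)) ^ 2) ^ m * (f (β 0) - f α)) :=
            mul_le_mul_of_nonneg_left ih hc0
        _ = (1 - (μ / (2 * L)) ^ 2) ^ (m + 1) * (f (β 0) - f α) := by ring
  · -- p = 0 : the space is a subsingleton, everything is trivial
    have hp0 : p = 0 := Nat.eq_zero_of_not_pos hp
    subst hp0
    haveI : Subsingleton (EuclideanSpace ℝ (Fin 0)) :=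
      ⟨fun a b => by ext i; exact i.elim0⟩
    intro m
    have h1 : β m = α := Subsingleton.elim _ _
    have h2 : β 0 = α := Subsingleton.elim _ _
    rw [h1, h2]
    simp
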